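/- Adversarial removal (Lemma on retraining probability, adversarial case): let X be a set of n distinct points in ℝ^d with n ≥ K ≥ 1, let ε1 > 0 and ε2 ≥ 1, fix C* and a* as in the optimal-clustering setup, and let X_R ⊆ X be a set of R points such that every x ∈ X_R is not an ε2-outlier and its optimal cluster satisfies |P_x| ≥ 2 and |P_x| ≥ n/(K·ε1). Let C = {c_1,…,c_K} be the random set of centroids produced by K-means++ initialization with parameter K on X. Then P(X_R ∩ C ≠ ∅) ≤ R·(1 + 20·K·(K−1)·ε1·ε2)/n. -/

import Mathlib

open scoped BigOperators Classical

noncomputable section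

abbrev Pt (d : ℕ) := EuclideanSpace ℝ (Fin d)

variable {d : ℕ}

/-- Distance from a point to a finite set of centroids (`0` if the set is empty). -/
def dSet (x : Pt d) (C : Finset (Pt d)) : ℝ :=
  if h : C.Nonempty then C.inf' h fun c => dist x c else 0

/-- `K`-means cost of a multiset of points w.r.t. a finite centroid set. -/
def kcost (X : Multiset (Pt d)) (C : Finset (Pt d)) : ℝ :=
  (X.map fun x => dSet x C ^ 2).sum

/-- Optimal `K`-means objective. -/
def optCost (K : ℕ) (X : Multiset (Pt d)) : ℝ :=
  sInf {v | ∃ C : Finset (Pt d), C.Nonempty ∧ C.card ≤ K ∧ v = kcost X C}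

/-- Set of entries of the tuple `c` with index `< j`. -/
def prefSet {K : ℕ} (c : Fin K → Pt d) (j : Fin K) : Finset (Pt d) :=
  (Finset.univ.filter fun i => i < j).image c

/-- Probability of picking `c j` as the `j`-th centroid in K-means++ initialization on `X`,
given that the previous centroids are the entries of `c` with index `< j`. -/
def stepProb (X : Multiset (Pt d)) {K : ℕ} (c : Fin K → Pt d) (j : Fin K) : ℝ :=
  if (j : ℕ) = 0 then (X.count (c j) : ℝ) / (Multiset.card X : ℝ)
  else (X.count (c j) : ℝ) * dSet (c j) (prefSet c j) ^ 2 / kcost X (prefSet c j)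

/-- PMF of K-means++ initialization with parameter `K` on the multiset `X`,
as a function on `K`-tuples of points. -/
def kmppProb (X : Multiset (Pt d)) {K : ℕ} (c : Fin K → Pt d) : ℝ :=
  ∏ j : Fin K, stepProb X c j

/-- Tuples with all entries in the finite set `X`. -/
def tupleSupp (X : Finset (Pt d)) (K : ℕ) : Finset (Fin K → Pt d) :=
  Fintype.piFinset fun _ => X

/-- The nearest centroid among the entries of `c` to `x`, ties broken by smallest index
(junk value `x` when `K = 0`). -/
def assignPt {K : ℕ} (c : Fin K → Pt d) (x : Pt d) : Pt d :=
  if h : (Finset.univ.filter fun j : Fin K => ∀ i, dist x (c j) ≤ dist x (c i)).Nonempty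
  then c ((Finset.univ.filter fun j : Fin K => ∀ i, dist x (c j) ≤ dist x (c i)).min' h)
  else x


section Aux

variable {d : ℕ}

lemma dSet_nonneg (x : Pt d) (C : Finset (Pt d)) : 0 ≤ dSet x C := by
  unfold dSet
  split_ifs with h
  · exact Finset.le_inf' h _ (fun c _ => dist_nonneg)
  · exact le_refl 0
  
lemma dSet_le (x : Pt d) {C : Finset (Pt d)} {c : Pt d} (hc : c ∈ C) :
    dSet x C ≤ dist x c := by
  unfold dSet
  rw [dif_pos ⟨c, hc⟩]
  exact Finset.inf'_le _ hc

lemma exists_dSet (x : Pt d) {C : Finset (Pt d)} (h : C.Nonempty) :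
    ∃ c ∈ C, dSet x C = dist x c := by
  unfold dSet
  rw [dif_pos h]
  obtain ⟨c, hc, he⟩ := Finset.exists_mem_eq_inf' h (fun c => dist x c)
  exact ⟨c, hc, he⟩

lemma dSet_triangle (x y : Pt d) {C : Finset (Pt d)} (h : C.Nonempty) :
    dSet x C ≤ dist x y + dSet y C := by
  obtain ⟨c, hc, he⟩ := exists_dSet y h
  calc dSet x C ≤ dist x c := dSet_le x hc
    _ ≤ dist x y + dist y c := dist_triangle x y c
    _ = dist x y + dSet y C := by rw [he]

lemma dSet_pos (x : Pt d) {C : Finset (Pt d)} (h : C.Nonempty) (hx : x ∉ C) :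
    0 < dSet x C := by
  unfold dSet
  rw [dif_pos h]
  rw [Finset.lt_inf'_iff]
  intro c hc
  exact dist_pos.mpr (fun e => hx (e ▸ hc))

lemma kcost_finset (X : Finset (Pt d)) (C : Finset (Pt d)) :
    kcost X.val C = ∑ x ∈ X, dSet x C ^ 2 := rfl

lemma kcost_nonneg (X : Multiset (Pt d)) (C : Finset (Pt d)) : 0 ≤ kcost X C := by
  unfold kcost
  apply Multiset.sum_nonneg
  intro a ha
  obtain ⟨x, _, rfl⟩ := Multiset.mem_map.mp ha
  positivity

lemma kcost_pos (X : Finset (Pt d)) {C : Finset (Pt d)} (hC : C.Nonempty)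
    {x : Pt d} (hx : x ∈ X) (hxC : x ∉ C) : 0 < kcost X.val C := by
  rw [kcost_finset]
  calc (0:ℝ) < dSet x C ^ 2 := pow_pos (dSet_pos x hC hxC) 2
    _ ≤ ∑ y ∈ X, dSet y C ^ 2 :=
        Finset.single_le_sum (f := fun y => dSet y C ^ 2) (fun y _ => by positivity) hx

lemma stepProb_nonneg (X : Multiset (Pt d)) {K : ℕ} (c : Fin K → Pt d) (j : Fin K) :
    0 ≤ stepProb X c j := by
  unfold stepProb
  split_ifs with h
  · positivity
  · have := kcost_nonneg X (prefSet c j)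
    have := dSet_nonneg (c j) (prefSet c j)
    positivity

lemma kmppProb_nonneg (X : Multiset (Pt d)) {K : ℕ} (c : Fin K → Pt d) :
    0 ≤ kmppProb X c :=
  Finset.prod_nonneg (fun j _ => stepProb_nonneg X c j)

lemma prefSet_snoc_castSucc {K : ℕ} (c0 : Fin K → Pt d) (v : Pt d) (j : Fin K) :
    prefSet (Fin.snoc c0 v) (Fin.castSucc j) = prefSet c0 j := by
  unfold prefSet
  ext z
  simp only [Finset.mem_image, Finset.mem_filter, Finset.mem_univ, true_and]
  constructor
  · rintro ⟨i, hi, rfl⟩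
    induction i using Fin.lastCases with
    | last => exact absurd hi (not_lt.mpr (le_of_lt (Fin.castSucc_lt_last j)))
    | cast i =>
      rw [Fin.snoc_castSucc]
      exact ⟨i, by simpa using hi, rfl⟩
  · rintro ⟨i, hi, rfl⟩
    exact ⟨Fin.castSucc i, by simpa using hi, by rw [Fin.snoc_castSucc]⟩

lemma prefSet_snoc_last {K : ℕ} (c0 : Fin K → Pt d) (v : Pt d) :
    prefSet (Fin.snoc c0 v) (Fin.last K) = Finset.univ.image c0 := by
  unfold prefSet
  ext z
  simp only [Finset.mem_image, Finset.mem_filter, Finset.mem_univ, true_and]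
  constructor
  · rintro ⟨i, hi, rfl⟩
    induction i using Fin.lastCases with
    | last => exact absurd hi (lt_irrefl _)
    | cast i =>
      rw [Fin.snoc_castSucc]
      exact ⟨i, rfl⟩
  · rintro ⟨i, rfl⟩
    exact ⟨Fin.castSucc i, Fin.castSucc_lt_last i, by rw [Fin.snoc_castSucc]⟩

lemma stepProb_snoc (X : Multiset (Pt d)) {K : ℕ} (c0 : Fin K → Pt d) (v : Pt d) (j : Fin K) :
    stepProb X (Fin.snoc c0 v) (Fin.castSucc j) = stepProb X c0 j := by
  unfold stepProb
  rw [prefSet_snoc_castSucc, Fin.snoc_castSucc]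
  rfl

lemma kmppProb_snoc (X : Multiset (Pt d)) {K : ℕ} (c0 : Fin K → Pt d) (v : Pt d) :
    kmppProb X (Fin.snoc c0 v) =
      kmppProb X c0 * stepProb X (Fin.snoc c0 v) (Fin.last K) := by
  unfold kmppProb
  rw [Fin.prod_univ_castSucc]
  congr 1
  exact Finset.prod_congr rfl (fun j _ => stepProb_snoc X c0 v j)

lemma mem_tupleSupp {X : Finset (Pt d)} {K : ℕ} {c : Fin K → Pt d} :
    c ∈ tupleSupp X K ↔ ∀ i, c i ∈ X := Fintype.mem_piFinset

lemma sum_tupleSupp_snoc (X : Finset (Pt d)) (K : ℕ) (F : (Fin (K + 1) → Pt d) → ℝ) :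
    ∑ c ∈ tupleSupp X (K + 1), F c
      = ∑ c0 ∈ tupleSupp X K, ∑ v ∈ X, F (Fin.snoc c0 v) := by
  rw [← Finset.sum_product']
  refine Finset.sum_nbij' (fun c => (Fin.init c, c (Fin.last K)))
    (fun p => Fin.snoc p.1 p.2) ?_ ?_ ?_ ?_ ?_
  · intro c hc
    rw [mem_tupleSupp] at hc
    refine Finset.mem_product.mpr ⟨?_, hc _⟩
    rw [mem_tupleSupp]
    intro i; exact hc _
  · intro p hp
    obtain ⟨h1, h2⟩ := Finset.mem_product.mp hp
    rw [mem_tupleSupp] at h1 ⊢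
    intro i
    show (Fin.snoc p.1 p.2 : Fin (K+1) → Pt d) i ∈ X
    refine Fin.lastCases ?_ ?_ i
    · rw [Fin.snoc_last]; exact h2
    · intro j; rw [Fin.snoc_castSucc]; exact h1 j
  · intro c _
    show (Fin.snoc (Fin.init c) (c (Fin.last K)) : Fin (K+1) → Pt d) = c
    exact Fin.snoc_init_self c
  · intro p _
    show ((Fin.init (Fin.snoc p.1 p.2 : Fin (K+1) → Pt d),
        (Fin.snoc p.1 p.2 : Fin (K+1) → Pt d) (Fin.last K)) : (Fin K → Pt d) × Pt d) = p
    rw [Fin.init_snoc, Fin.snoc_last]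
  · intro c _
    show F c = F (Fin.snoc (Fin.init c) (c (Fin.last K)) : Fin (K+1) → Pt d)
    rw [Fin.snoc_init_self c]

lemma sum_stepProb_last (X : Finset (Pt d)) {K : ℕ} (hK : K + 1 ≤ X.card)
    (c0 : Fin K → Pt d) (hc0 : ∀ i, c0 i ∈ X) :
    ∑ v ∈ X, stepProb X.val (Fin.snoc c0 v) (Fin.last K) = 1 := by
  have hXpos : (0:ℝ) < X.card := by
    have : 0 < X.card := lt_of_lt_of_le (Nat.succ_pos K) hK
    exact_mod_cast this
  rcases Nat.eq_zero_or_pos K with hK0 | hKpos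
  · subst hK0
    have : ∀ v ∈ X, stepProb X.val (Fin.snoc c0 v) (Fin.last 0) = 1 / X.card := by
      intro v hv
      unfold stepProb
      rw [if_pos (by simp [Fin.last])]
      rw [Fin.snoc_last]
      rw [Multiset.count_eq_one_of_mem X.nodup (Finset.mem_def.mp hv)]
      simp
    rw [Finset.sum_congr rfl this, Finset.sum_const, nsmul_eq_mul]
    field_simp
  · -- K ≥ 1
    have hne : (Fin.last K : ℕ) ≠ 0 := by simp [Fin.last]; omega
    set P0 : Finset (Pt d) := Finset.univ.image c0 with hP0
    have hP0ne : P0.Nonempty := by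
      have : Nonempty (Fin K) := ⟨⟨0, hKpos⟩⟩
      exact (Finset.univ_nonempty).image c0
    have hP0X : P0 ⊆ X := by
      intro z hz
      obtain ⟨i, _, rfl⟩ := Finset.mem_image.mp hz
      exact hc0 i
    have hP0card : P0.card ≤ K := le_trans (Finset.card_image_le) (by simp)
    have hx : ∃ x ∈ X, x ∉ P0 := by
      by_contra h
      push_neg at h
      have : X ⊆ P0 := fun x hx => h x hx
      have := Finset.card_le_card this
      omega
    obtain ⟨x, hxX, hxP0⟩ := hx
    have hkpos : 0 < kcost X.val P0 := kcost_pos X hP0ne hxX hxP0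
    have hstep : ∀ v ∈ X, stepProb X.val (Fin.snoc c0 v) (Fin.last K)
        = dSet v P0 ^ 2 / kcost X.val P0 := by
      intro v hv
      unfold stepProb
      rw [if_neg hne, prefSet_snoc_last, Fin.snoc_last,
        Multiset.count_eq_one_of_mem X.nodup (Finset.mem_def.mp hv)]
      simp [hP0]
    rw [Finset.sum_congr rfl hstep, ← Finset.sum_div, ← kcost_finset]
    field_simp

lemma sum_kmppProb (X : Finset (Pt d)) : ∀ (K : ℕ), K ≤ X.card →
    ∑ c ∈ tupleSupp X K, kmppProb X.val c = 1 := by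
  intro K
  induction K with
  | zero =>
    intro _
    have h1 : ∀ c ∈ tupleSupp X 0, kmppProb X.val c = 1 := by
      intro c _
      unfold kmppProb
      simp
    rw [Finset.sum_congr rfl h1, Finset.sum_const, nsmul_eq_mul, mul_one]
    unfold tupleSupp
    rw [Fintype.card_piFinset]
    simp
  | succ K ih =>
    intro hK
    rw [sum_tupleSupp_snoc]
    have : ∀ c0 ∈ tupleSupp X K,
        ∑ v ∈ X, kmppProb X.val (Fin.snoc c0 v) = kmppProb X.val c0 := by
      intro c0 hc0
      have h1 : ∀ v ∈ X, kmppProb X.val (Fin.snoc c0 v)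
          = kmppProb X.val c0 * stepProb X.val (Fin.snoc c0 v) (Fin.last K) :=
        fun v _ => kmppProb_snoc X.val c0 v
      rw [Finset.sum_congr rfl h1, ← Finset.mul_sum,
        sum_stepProb_last X hK c0 (mem_tupleSupp.mp hc0), mul_one]
    rw [Finset.sum_congr rfl this]
    exact ih (le_trans (Nat.le_succ K) hK)


lemma univ_image_nonempty {K : ℕ} (hKpos : 0 < K) (c0 : Fin K → Pt d) :
    (Finset.univ.image c0).Nonempty := by
  have : Nonempty (Fin K) := ⟨⟨0, hKpos⟩⟩
  exact Finset.univ_nonempty.image c0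

lemma kcost_image_pos (X : Finset (Pt d)) {K : ℕ} (hKpos : 0 < K) (hKcard : K < X.card)
    (c0 : Fin K → Pt d) (hc0 : ∀ i, c0 i ∈ X) :
    0 < kcost X.val (Finset.univ.image c0) := by
  set P0 : Finset (Pt d) := Finset.univ.image c0 with hP0
  have hP0X : P0 ⊆ X := by
    intro z hz
    obtain ⟨i, _, rfl⟩ := Finset.mem_image.mp hz
    exact hc0 i
  have hP0card : P0.card ≤ K := le_trans (Finset.card_image_le) (by simp)
  have hx : ∃ x ∈ X, x ∉ P0 := by
    by_contra h
    push_neg at h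
    have := Finset.card_le_card (fun x hx => h x hx : X ⊆ P0)
    omega
  obtain ⟨x, hxX, hxP0⟩ := hx
  exact kcost_pos X (univ_image_nonempty hKpos c0) hxX hxP0

lemma stepProb_snoc_last_eq (X : Finset (Pt d)) {K : ℕ} (hKpos : 0 < K)
    (c0 : Fin K → Pt d) {v : Pt d} (hv : v ∈ X) :
    stepProb X.val (Fin.snoc c0 v) (Fin.last K)
      = dSet v (Finset.univ.image c0) ^ 2 / kcost X.val (Finset.univ.image c0) := by
  have hne : ((Fin.last K : Fin (K+1)) : ℕ) ≠ 0 := by simp [Fin.last]; omega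
  unfold stepProb
  rw [if_neg hne, prefSet_snoc_last, Fin.snoc_last,
    Multiset.count_eq_one_of_mem X.nodup (Finset.mem_def.mp hv)]
  simp

set_option maxHeartbeats 1000000 in
lemma step_bound {K : ℕ} (hK : 1 ≤ K)
    (X : Finset (Pt d)) (hKn : K ≤ X.card)
    (ε1 ε2 : ℝ) (hε1 : 0 < ε1) (hε2 : 1 ≤ ε2)
    (Cstar : Finset (Pt d)) (hCne : Cstar.Nonempty) (hCcard : Cstar.card ≤ K)
    (hCopt : kcost X.val Cstar = optCost K X.val)
    (astar : Pt d → Pt d)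
    (hastar : ∀ y ∈ X, astar y ∈ Cstar ∧ dist y (astar y) = dSet y Cstar)
    (XR : Finset (Pt d)) (hXR : XR ⊆ X)
    (hout : ∀ x ∈ XR,
      dist x (astar x) ^ 2 * ((X.filter fun y => astar y = astar x).card : ℝ)
        ≤ ε2 * ∑ y ∈ X.filter (fun y => astar y = astar x), dist y (astar x) ^ 2)
    (hP1 : ∀ x ∈ XR,
      (X.card : ℝ) / (K * ε1) ≤ ((X.filter fun y => astar y = astar x).card : ℝ))
    {K' : ℕ} (hK'1 : 1 ≤ K') (hK'K : K' < K)
    (c0 : Fin K' → Pt d) (hc0 : ∀ i, c0 i ∈ X)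
    {v : Pt d} (hv : v ∈ XR) :
    stepProb X.val (Fin.snoc c0 v) (Fin.last K') ≤ 10 * ε2 * K * ε1 / X.card := by
  have hvX : v ∈ X := hXR hv
  have hn : (0:ℝ) < X.card := by
    have : 0 < X.card := lt_of_lt_of_le hK hKn
    exact_mod_cast this
  set P0 : Finset (Pt d) := Finset.univ.image c0 with hP0def
  have hP0ne : P0.Nonempty := univ_image_nonempty hK'1 c0
  have hP0card : P0.card ≤ K := by
    have : P0.card ≤ K' := le_trans (Finset.card_image_le) (by simp)
    omega
  have hφpos : 0 < kcost X.val P0 :=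
    kcost_image_pos X hK'1 (lt_of_lt_of_le hK'K hKn) c0 hc0
  set φ := kcost X.val P0 with hφdef
  rw [stepProb_snoc_last_eq X hK'1 c0 hvX]
  set P : Finset (Pt d) := X.filter (fun y => astar y = astar v) with hPdef
  set a : Pt d := astar v with hadef
  have hvP : v ∈ P := Finset.mem_filter.mpr ⟨hvX, rfl⟩
  set m : ℝ := (P.card : ℝ) with hmdef
  have hm : 0 < m := by
    have h : 0 < P.card := Finset.card_pos.mpr ⟨v, hvP⟩
    rw [hmdef]
    exact_mod_cast h
  set A : ℝ := ∑ y ∈ P, dist y a ^ 2 with hAdef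
  set B : ℝ := ∑ y ∈ P, dSet y P0 ^ 2 with hBdef
  have hA0 : 0 ≤ A := Finset.sum_nonneg (fun y _ => by positivity)
  have hB0 : 0 ≤ B := Finset.sum_nonneg (fun y _ => by positivity)
  have hBφ : B ≤ φ := by
    rw [hφdef, kcost_finset, hBdef]
    exact Finset.sum_le_sum_of_subset_of_nonneg (Finset.filter_subset _ _)
      (fun y _ _ => by positivity)
  have hAφ : A ≤ φ := by
    have h1 : optCost K X.val ≤ φ := by
      apply csInf_le
      · exact ⟨0, fun w hw => by obtain ⟨C, _, _, rfl⟩ := hw; exact kcost_nonneg _ _⟩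
      · exact ⟨P0, hP0ne, hP0card, rfl⟩
    have h2 : A ≤ kcost X.val Cstar := by
      rw [kcost_finset, hAdef]
      have he : ∀ y ∈ P, dist y a ^ 2 = dSet y Cstar ^ 2 := by
        intro y hy
        obtain ⟨hyX, hya⟩ := Finset.mem_filter.mp hy
        rw [hadef, ← hya, (hastar y hyX).2]
      rw [Finset.sum_congr rfl he]
      exact Finset.sum_le_sum_of_subset_of_nonneg (Finset.filter_subset _ _)
        (fun y _ _ => by positivity)
    rw [hCopt] at h2
    linarith
  have hvA : dist v a ^ 2 * m ≤ ε2 * A := hout v hv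
  have haP0 : m * dSet a P0 ^ 2 ≤ 2 * A + 2 * B := by
    have hpt : ∀ y ∈ P, dSet a P0 ^ 2 ≤ 2 * dist y a ^ 2 + 2 * dSet y P0 ^ 2 := by
      intro y hy
      have h1 : dSet a P0 ≤ dist a y + dSet y P0 := dSet_triangle a y hP0ne
      have h2 : 0 ≤ dSet a P0 := dSet_nonneg _ _
      have h4 : 0 ≤ dSet y P0 := dSet_nonneg _ _
      have h5 : dist a y = dist y a := dist_comm a y
      nlinarith [sq_nonneg (dist y a - dSet y P0), dist_nonneg (x := a) (y := y)]
    calc m * dSet a P0 ^ 2 = ∑ _y ∈ P, dSet a P0 ^ 2 := by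
          rw [Finset.sum_const, nsmul_eq_mul]
      _ ≤ ∑ y ∈ P, (2 * dist y a ^ 2 + 2 * dSet y P0 ^ 2) := Finset.sum_le_sum hpt
      _ = 2 * A + 2 * B := by
          rw [Finset.sum_add_distrib, ← Finset.mul_sum, ← Finset.mul_sum]
  have hvP0 : dSet v P0 ^ 2 ≤ 2 * dist v a ^ 2 + 2 * dSet a P0 ^ 2 := by
    have h1 : dSet v P0 ≤ dist v a + dSet a P0 := dSet_triangle v a hP0ne
    nlinarith [sq_nonneg (dist v a - dSet a P0), dSet_nonneg v P0,
      dist_nonneg (x := v) (y := a), dSet_nonneg a P0]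
  have key : dSet v P0 ^ 2 * m ≤ 10 * ε2 * φ := by
    have s1 : dSet v P0 ^ 2 * m ≤ (2 * dist v a ^ 2 + 2 * dSet a P0 ^ 2) * m :=
      mul_le_mul_of_nonneg_right hvP0 hm.le
    have p1 : ε2 * A ≤ ε2 * φ := mul_le_mul_of_nonneg_left hAφ (by linarith)
    have p2 : φ ≤ ε2 * φ := le_mul_of_one_le_left hφpos.le hε2
    nlinarith [s1, hvA, haP0, p1, p2, hAφ, hBφ]
  have hP1' : (X.card : ℝ) / (K * ε1) ≤ m := hP1 v hv
  have hKε1 : (0:ℝ) < K * ε1 := by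
    have : (0:ℝ) < K := by exact_mod_cast lt_of_lt_of_le Nat.zero_lt_one hK
    exact mul_pos this hε1
  have h5 : (X.card : ℝ) ≤ m * (K * ε1) := by
    rw [div_le_iff₀ hKε1] at hP1'
    linarith
  rw [div_le_div_iff₀ hφpos hn]
  have hd0 : (0:ℝ) ≤ dSet v P0 ^ 2 := by positivity
  have e2 : dSet v P0 ^ 2 * (X.card : ℝ) ≤ dSet v P0 ^ 2 * (m * ((K:ℝ) * ε1)) :=
    mul_le_mul_of_nonneg_left h5 hd0
  have e1 : dSet v P0 ^ 2 * m * ((K:ℝ) * ε1) ≤ 10 * ε2 * φ * ((K:ℝ) * ε1) :=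
    mul_le_mul_of_nonneg_right key (le_of_lt hKε1)
  calc dSet v P0 ^ 2 * (X.card:ℝ) ≤ dSet v P0 ^ 2 * (m * ((K:ℝ) * ε1)) := e2
    _ = dSet v P0 ^ 2 * m * ((K:ℝ) * ε1) := by ring
    _ ≤ 10 * ε2 * φ * ((K:ℝ) * ε1) := e1
    _ = 10 * ε2 * (K:ℝ) * ε1 * φ := by ring

lemma main_aux {K : ℕ} (hK : 1 ≤ K)
    (X : Finset (Pt d)) (hKn : K ≤ X.card)
    (ε1 ε2 : ℝ) (hε1 : 0 < ε1) (hε2 : 1 ≤ ε2)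
    (Cstar : Finset (Pt d)) (hCne : Cstar.Nonempty) (hCcard : Cstar.card ≤ K)
    (hCopt : kcost X.val Cstar = optCost K X.val)
    (astar : Pt d → Pt d)
    (hastar : ∀ y ∈ X, astar y ∈ Cstar ∧ dist y (astar y) = dSet y Cstar)
    (XR : Finset (Pt d)) (hXR : XR ⊆ X) (R : ℕ) (hRcard : XR.card = R)
    (hout : ∀ x ∈ XR,
      dist x (astar x) ^ 2 * ((X.filter fun y => astar y = astar x).card : ℝ)
        ≤ ε2 * ∑ y ∈ X.filter (fun y => astar y = astar x), dist y (astar x) ^ 2)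
    (hP1 : ∀ x ∈ XR,
      (X.card : ℝ) / (K * ε1) ≤ ((X.filter fun y => astar y = astar x).card : ℝ)) :
    ∀ K', K' ≤ K →
      ∑ c ∈ tupleSupp X K', kmppProb X.val c * (if ∃ j, c j ∈ XR then (1:ℝ) else 0)
        ≤ ((min K' 1 : ℕ) : ℝ) * R / X.card
            + ((K' - 1 : ℕ) : ℝ) * R * (10 * ε2 * K * ε1 / X.card) := by
  have hn : (0:ℝ) < X.card := by
    have : 0 < X.card := lt_of_lt_of_le hK hKn
    exact_mod_cast this
  intro K'
  induction K' with
  | zero =>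
    intro _
    simp
  | succ K' ih =>
    intro hK'
    have hK'le : K' ≤ K := le_trans (Nat.le_succ K') hK'
    set Bstep : ℝ := if K' = 0 then 1 / X.card else 10 * ε2 * K * ε1 / X.card
      with hBstepdef
    have hBstep0 : 0 ≤ Bstep := by
      rw [hBstepdef]
      split_ifs
      · positivity
      · have hK0 : (0:ℝ) ≤ K := Nat.cast_nonneg K
        positivity
    rw [sum_tupleSupp_snoc]
    have hind : ∀ (c0 : Fin K' → Pt d) (v : Pt d),
        (if ∃ j, (Fin.snoc c0 v : Fin (K'+1) → Pt d) j ∈ XR then (1:ℝ) else 0)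
          ≤ (if ∃ j, c0 j ∈ XR then (1:ℝ) else 0)
            + (if v ∈ XR then (1:ℝ) else 0) := by
      intro c0 v
      by_cases h : ∃ j, (Fin.snoc c0 v : Fin (K'+1) → Pt d) j ∈ XR
      · rw [if_pos h]
        obtain ⟨j, hj⟩ := h
        rcases Fin.eq_castSucc_or_eq_last j with ⟨i, rfl⟩ | rfl
        · rw [Fin.snoc_castSucc] at hj
          rw [if_pos ⟨i, hj⟩]
          split_ifs <;> linarith
        · rw [Fin.snoc_last] at hj
          rw [if_pos hj]
          split_ifs <;> linarith
      · rw [if_neg h]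
        split_ifs <;> linarith
    have hmain : ∀ c0 ∈ tupleSupp X K',
        ∑ v ∈ X, kmppProb X.val (Fin.snoc c0 v)
            * (if ∃ j, (Fin.snoc c0 v : Fin (K'+1) → Pt d) j ∈ XR then (1:ℝ) else 0)
          ≤ kmppProb X.val c0 * (if ∃ j, c0 j ∈ XR then (1:ℝ) else 0)
            + kmppProb X.val c0 * (R * Bstep) := by
      intro c0 hc0
      have hc0m : ∀ i, c0 i ∈ X := mem_tupleSupp.mp hc0
      have hkm0 : 0 ≤ kmppProb X.val c0 := kmppProb_nonneg _ _
      have hstepsum : ∑ v ∈ X, stepProb X.val (Fin.snoc c0 v) (Fin.last K') = 1 :=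
        sum_stepProb_last X (le_trans hK' hKn) c0 hc0m
      have hB : ∀ v ∈ XR, stepProb X.val (Fin.snoc c0 v) (Fin.last K') ≤ Bstep := by
        intro v hv
        rw [hBstepdef]
        rcases Nat.eq_zero_or_pos K' with hK0 | hKpos
        · subst hK0
          rw [if_pos rfl]
          have hvX : v ∈ X := hXR hv
          unfold stepProb
          rw [if_pos (by simp [Fin.last]), Fin.snoc_last,
            Multiset.count_eq_one_of_mem X.nodup (Finset.mem_def.mp hvX)]
          simp
        · rw [if_neg (by omega)]
          exact step_bound hK X hKn ε1 ε2 hε1 hε2 Cstar hCne hCcard hCopt astar hastar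
            XR hXR hout hP1 hKpos (by omega) c0 hc0m hv
      have h1 : ∀ v ∈ X,
          kmppProb X.val (Fin.snoc c0 v)
              * (if ∃ j, (Fin.snoc c0 v : Fin (K'+1) → Pt d) j ∈ XR then (1:ℝ) else 0)
            ≤ kmppProb X.val c0 * stepProb X.val (Fin.snoc c0 v) (Fin.last K')
                * ((if ∃ j, c0 j ∈ XR then (1:ℝ) else 0)
                  + (if v ∈ XR then (1:ℝ) else 0)) := by
        intro v hv
        rw [kmppProb_snoc]
        have hnn : 0 ≤ kmppProb X.val c0 * stepProb X.val (Fin.snoc c0 v) (Fin.last K') :=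
          mul_nonneg hkm0 (stepProb_nonneg _ _ _)
        exact mul_le_mul_of_nonneg_left (hind c0 v) hnn
      calc ∑ v ∈ X, kmppProb X.val (Fin.snoc c0 v)
              * (if ∃ j, (Fin.snoc c0 v : Fin (K'+1) → Pt d) j ∈ XR then (1:ℝ) else 0)
          ≤ ∑ v ∈ X, kmppProb X.val c0 * stepProb X.val (Fin.snoc c0 v) (Fin.last K')
              * ((if ∃ j, c0 j ∈ XR then (1:ℝ) else 0)
                + (if v ∈ XR then (1:ℝ) else 0)) := Finset.sum_le_sum h1
        _ = (kmppProb X.val c0 * (if ∃ j, c0 j ∈ XR then (1:ℝ) else 0))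
              * (∑ v ∈ X, stepProb X.val (Fin.snoc c0 v) (Fin.last K'))
            + kmppProb X.val c0
              * (∑ v ∈ X, stepProb X.val (Fin.snoc c0 v) (Fin.last K')
                  * (if v ∈ XR then (1:ℝ) else 0)) := by
            rw [Finset.mul_sum, Finset.mul_sum, ← Finset.sum_add_distrib]
            exact Finset.sum_congr rfl (fun v _ => by ring)
        _ = kmppProb X.val c0 * (if ∃ j, c0 j ∈ XR then (1:ℝ) else 0)
            + kmppProb X.val c0 * (∑ v ∈ XR, stepProb X.val (Fin.snoc c0 v) (Fin.last K')) := by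
            rw [hstepsum, mul_one]
            congr 1
            congr 1
            simp only [mul_ite, mul_one, mul_zero]
            rw [← Finset.sum_filter, Finset.filter_mem_eq_inter,
              Finset.inter_eq_right.mpr hXR]
        _ ≤ kmppProb X.val c0 * (if ∃ j, c0 j ∈ XR then (1:ℝ) else 0)
            + kmppProb X.val c0 * (R * Bstep) := by
            have : ∑ v ∈ XR, stepProb X.val (Fin.snoc c0 v) (Fin.last K') ≤ R * Bstep := by
              calc ∑ v ∈ XR, stepProb X.val (Fin.snoc c0 v) (Fin.last K')
                  ≤ ∑ _v ∈ XR, Bstep := Finset.sum_le_sum hB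
                _ = R * Bstep := by rw [Finset.sum_const, nsmul_eq_mul, hRcard]
            have h2 := mul_le_mul_of_nonneg_left this hkm0
            linarith
    calc ∑ c0 ∈ tupleSupp X K', ∑ v ∈ X, kmppProb X.val (Fin.snoc c0 v)
            * (if ∃ j, (Fin.snoc c0 v : Fin (K'+1) → Pt d) j ∈ XR then (1:ℝ) else 0)
        ≤ ∑ c0 ∈ tupleSupp X K',
            (kmppProb X.val c0 * (if ∃ j, c0 j ∈ XR then (1:ℝ) else 0)
              + kmppProb X.val c0 * (R * Bstep)) := Finset.sum_le_sum hmain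
      _ = (∑ c0 ∈ tupleSupp X K',
            kmppProb X.val c0 * (if ∃ j, c0 j ∈ XR then (1:ℝ) else 0))
          + (∑ c0 ∈ tupleSupp X K', kmppProb X.val c0) * (R * Bstep) := by
          rw [Finset.sum_add_distrib, Finset.sum_mul]
      _ = (∑ c0 ∈ tupleSupp X K',
            kmppProb X.val c0 * (if ∃ j, c0 j ∈ XR then (1:ℝ) else 0))
          + R * Bstep := by
          rw [sum_kmppProb X K' (le_trans hK'le hKn), one_mul]
      _ ≤ (((min K' 1 : ℕ) : ℝ) * R / X.card
            + ((K' - 1 : ℕ) : ℝ) * R * (10 * ε2 * K * ε1 / X.card)) + R * Bstep :=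
          add_le_add_left (ih hK'le) _
      _ ≤ ((min (K'+1) 1 : ℕ) : ℝ) * R / X.card
            + ((K' + 1 - 1 : ℕ) : ℝ) * R * (10 * ε2 * K * ε1 / X.card) := by
          rcases Nat.eq_zero_or_pos K' with hK0 | hKpos
          · subst hK0
            rw [hBstepdef, if_pos rfl]
            apply le_of_eq
            norm_num [div_eq_mul_inv]
          · rw [hBstepdef, if_neg (by omega)]
            have hmin1 : min K' 1 = 1 := min_eq_right hKpos
            have hmin2 : min (K'+1) 1 = 1 := min_eq_right (by omega)
            have hsub : ((K' - 1 : ℕ) : ℝ) = (K' : ℝ) - 1 := by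
              rw [Nat.cast_sub hKpos]
              simp
            rw [hmin1, hmin2, hsub]
            have : ((K' + 1 - 1 : ℕ) : ℝ) = (K' : ℝ) := by
              simp
            rw [this]
            apply le_of_eq
            push_cast
            ring

end Aux


/-- retraining probability, adversarial removal.  Let `X_R ⊆ X` consist
of `R` points, each of which is not an `ε2`-outlier and whose optimal cluster `P_x`
satisfies `|P_x| ≥ 2` and `|P_x| ≥ n/(K ε1)`.  If `C` is the random centroid set produced
by K-means++ initialization with parameter `K` on `X`, then
`P(X_R ∩ C ≠ ∅) ≤ R (1 + 20 K (K−1) ε1 ε2)/n`. -/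
theorem retraining_probability_adversarial_removal {d K : ℕ} (hK : 1 ≤ K)
    (X : Finset (Pt d)) (hKn : K ≤ X.card)
    (ε1 ε2 : ℝ) (hε1 : 0 < ε1) (hε2 : 1 ≤ ε2)
    (Cstar : Finset (Pt d)) (hCne : Cstar.Nonempty) (hCcard : Cstar.card ≤ K)
    (hCopt : kcost X.val Cstar = optCost K X.val)
    (astar : Pt d → Pt d)
    (hastar : ∀ y ∈ X, astar y ∈ Cstar ∧ dist y (astar y) = dSet y Cstar)
    (XR : Finset (Pt d)) (hXR : XR ⊆ X) (R : ℕ) (hRcard : XR.card = R)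
    (hout : ∀ x ∈ XR,
      dist x (astar x) ^ 2 * ((X.filter fun y => astar y = astar x).card : ℝ)
        ≤ ε2 * ∑ y ∈ X.filter (fun y => astar y = astar x), dist y (astar x) ^ 2)
    (hP2 : ∀ x ∈ XR, 2 ≤ (X.filter fun y => astar y = astar x).card)
    (hP1 : ∀ x ∈ XR,
      (X.card : ℝ) / (K * ε1) ≤ ((X.filter fun y => astar y = astar x).card : ℝ)) :
    ∑ C ∈ tupleSupp X K,
        kmppProb X.val C * (if ∃ j, C j ∈ XR then (1 : ℝ) else 0)
      ≤ R * (1 + 20 * K * ((K : ℝ) - 1) * ε1 * ε2) / X.card := by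
  have h := main_aux hK X hKn ε1 ε2 hε1 hε2 Cstar hCne hCcard hCopt astar hastar
    XR hXR R hRcard hout hP1 K le_rfl
  refine le_trans h ?_
  have hn : (0:ℝ) < X.card := by
    have : 0 < X.card := lt_of_lt_of_le hK hKn
    exact_mod_cast this
  have hmin : min K 1 = 1 := min_eq_right hK
  have hsub : ((K - 1 : ℕ) : ℝ) = (K:ℝ) - 1 := by rw [Nat.cast_sub hK]; simp
  rw [hmin, hsub, Nat.cast_one, one_mul, ← mul_div_assoc, ← add_div,
    div_le_div_iff₀ hn hn]
  have hR0 : (0:ℝ) ≤ R := Nat.cast_nonneg R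
  have hK0 : (0:ℝ) ≤ K := Nat.cast_nonneg K
  have hKm1 : (0:ℝ) ≤ (K:ℝ) - 1 := by
    have : (1:ℝ) ≤ K := by exact_mod_cast hK
    linarith
  have h0 : (0:ℝ) ≤ (R:ℝ) * (((K:ℝ) - 1) * ((K:ℝ) * (ε1 * ε2))) :=
    mul_nonneg hR0 (mul_nonneg hKm1 (mul_nonneg hK0
      (mul_nonneg hε1.le (by linarith))))
  nlinarith [h0, sq_nonneg ((X.card:ℝ))]
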